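/- Let S be a finite set with |S| = k ≥ 2 and let H ≤ Sym({1,…,n}) be a nontrivial permutation group acting on the set S^n of functions {1,…,n} → S by permuting coordinates. Then the number of non-regular orbits of H on S^n (orbits of size strictly less than |H|) is strictly less than 2·k^{α(H)·n}, where α(H) := max_{1≠h∈H} σ(h)/n. -/

import Mathlib

open Equiv MulAction

/-- The number of conjugacy classes of a group. -/
noncomputable def kclass (G : Type*) [Group G] : ℕ := Nat.card (ConjClasses G)

/-- The coordinate-permuting action of `Perm ι` on `ι → X`, as automorphisms. -/
def permAut (ι X : Type*) [Group X] : Perm ι →* MulAut (ι → X) where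
  toFun e :=
    { toFun := fun f => f ∘ e.symm
      invFun := fun f => f ∘ e
      left_inv := fun f => by funext i; simp
      right_inv := fun f => by funext i; simp
      map_mul' := fun f g => rfl }
  map_one' := by ext f; rfl
  map_mul' := fun e₁ e₂ => by ext f; rfl

/-- The wreath product `X ≀ H` of a group `X` with a permutation group `H ≤ Perm ι`,
i.e. the semidirect product `X^ι ⋊ H` where `H` permutes the direct factors of `X^ι`. -/
abbrev Wreath (X : Type*) [Group X] {ι : Type*} (H : Subgroup (Perm ι)) :=
  SemidirectProduct (ι → X) H ((permAut ι X).comp H.subtype)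

/-- A group acting on `Ω` acts on the functions `Ω → S` by permuting coordinates. -/
instance funMulAction (G Ω S : Type*) [Group G] [MulAction G Ω] : MulAction G (Ω → S) where
  smul g f := fun ω => f (g⁻¹ • ω)
  one_smul f := funext fun ω => by
    show f ((1 : G)⁻¹ • ω) = f ω
    rw [inv_one, one_smul]
  mul_smul g h f := funext fun ω => by
    show f ((g * h)⁻¹ • ω) = f (h⁻¹ • g⁻¹ • ω)
    rw [mul_inv_rev, mul_smul]

/-- `σ(h)`: the number of cycles of a permutation `h` in its disjoint cycle decomposition,
with fixed points counted as cycles of length 1; equivalently, the number of orbits of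
the cyclic group generated by `h`. -/
noncomputable def cycleCount {ι : Type*} (h : Perm ι) : ℕ :=
  Nat.card (orbitRel.Quotient (Subgroup.zpowers h) ι)

/-- `n(G, α)`: the number of orbits of a group action. -/
noncomputable def orbitCount (G : Type*) [Group G] (α : Type*) [MulAction G α] : ℕ :=
  Nat.card (orbitRel.Quotient G α)

lemma fixcard {n : ℕ} (S : Type) [Finite S] (g : Perm (Fin n)) :
    Nat.card {x : Fin n → S // ∀ i, x (g i) = x i} = Nat.card S ^ cycleCount g := by
  have key : ∀ (x : Fin n → S), (∀ i, x (g i) = x i) → ∀ (m : ℤ) (i), x ((g ^ m) i) = x i := by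
    intro x hx m
    induction m using Int.induction_on with
    | zero => simp
    | succ m ih =>
        intro i
        have h1 : (g ^ ((m : ℤ) + 1)) i = (g ^ (m : ℤ)) (g i) := by
          rw [zpow_add_one]; rfl
        rw [h1, ih, hx]
    | pred m ih =>
        intro i
        have h1 : (g ^ (-(m : ℤ) - 1)) i = (g ^ (-(m : ℤ))) (g⁻¹ i) := by
          rw [zpow_sub_one]; rfl
        rw [h1, ih]
        have h2 := hx (g⁻¹ i)
        rw [show g (g⁻¹ i) = i from g.apply_symm_apply i] at h2
        exact h2.symm
  let e : {x : Fin n → S // ∀ i, x (g i) = x i} ≃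
      (orbitRel.Quotient (Subgroup.zpowers g) (Fin n) → S) :=
  { toFun := fun x => Quotient.lift x.1 (by
      intro a b hab
      obtain ⟨u, hu⟩ := hab
      obtain ⟨m, hm⟩ := Subgroup.mem_zpowers_iff.mp u.2
      rw [← hu]
      show x.1 ((u : Perm (Fin n)) b) = x.1 b
      rw [← hm]
      exact key x.1 x.2 m b)
    invFun := fun f => ⟨fun i => f (Quotient.mk'' i), fun i => by
      have : (Quotient.mk'' (g i) : orbitRel.Quotient (Subgroup.zpowers g) (Fin n)) =
          Quotient.mk'' i := by
        apply Quotient.sound'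
        exact ⟨⟨g, Subgroup.mem_zpowers g⟩, rfl⟩
      simp only [this]⟩
    left_inv := fun x => rfl
    right_inv := fun f => by
      funext q
      induction q using Quotient.inductionOn'
      rfl }
  rw [Nat.card_congr e, Nat.card_fun, cycleCount]

/-- The number of non-regular orbits of a nontrivial `H ≤ Sym(n)` on `S^n` is less than
`2 k^{α(H) n}`, where `k = |S| ≥ 2` and `α(H) = max_{1 ≠ h ∈ H} σ(h)/n`. -/
theorem statement4 (n k : ℕ) (hk : 2 ≤ k) (S : Type) [Finite S] (hS : Nat.card S = k)
    (H : Subgroup (Perm (Fin n))) [Nontrivial H] (α : ℝ)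
    (hα : IsGreatest
      {a : ℝ | ∃ h : H, h ≠ 1 ∧ a = (cycleCount (h : Perm (Fin n)) : ℝ) / n} α) :
    (Nat.card {q : orbitRel.Quotient H (Fin n → S) //
        Nat.card q.orbit < Nat.card H} : ℝ) < 2 * (k : ℝ) ^ (α * n) := by
  classical
  have hn : (0 : ℝ) < n := by
    rcases Nat.eq_zero_or_pos n with h0 | h0
    · exfalso
      subst h0
      obtain ⟨a, b, hab⟩ := exists_pair_ne H
      exact hab (Subtype.ext (Equiv.ext fun i => i.elim0))
    · exact_mod_cast h0
  haveI : Fintype S := Fintype.ofFinite S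
  haveI : Fintype H := Fintype.ofFinite H
  haveI : Fintype (orbitRel.Quotient H (Fin n → S)) := Fintype.ofFinite _
  set Q := orbitRel.Quotient H (Fin n → S)
  set m := Nat.card H with hm
  have hmpos : 0 < m := Nat.card_pos
  set K := (k : ℝ) ^ (α * n) with hKdef
  have hk1 : (1 : ℝ) ≤ (k : ℝ) := by exact_mod_cast Nat.one_le_of_lt hk
  have hK : 0 < K := Real.rpow_pos_of_pos (by linarith) _
  -- fixed point condition
  have hsm : ∀ (h : H) (x : Fin n → S), h • x = x ↔ ∀ i, x ((h : Perm (Fin n)) i) = x i := by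
    intro h x
    constructor
    · intro hx i
      have h2 : x (((h : Perm (Fin n)))⁻¹ ((h : Perm (Fin n)) i)) = x ((h : Perm (Fin n)) i) :=
        congrFun hx ((h : Perm (Fin n)) i)
      simpa using h2.symm
    · intro hx
      funext ω
      show x (((h : Perm (Fin n)))⁻¹ ω) = x ω
      have h2 := hx (((h : Perm (Fin n)))⁻¹ ω)
      simpa using h2.symm
  -- fixed point count bound
  have hfix : ∀ h : H, h ≠ 1 →
      (((Finset.univ.filter fun x : Fin n → S => h • x = x)).card : ℝ) ≤ K := by
    intro h hh
    have e1 : ((Finset.univ.filter fun x : Fin n → S => h • x = x)).card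
        = k ^ cycleCount (h : Perm (Fin n)) := by
      rw [← hS, ← fixcard S (h : Perm (Fin n)), Nat.card_eq_fintype_card, Fintype.card_subtype]
      congr 1
      ext x
      simp [hsm h x]
    rw [e1]
    have hσ : ((cycleCount (h : Perm (Fin n)) : ℕ) : ℝ) ≤ α * n := by
      have hmem := hα.2 ⟨h, hh, rfl⟩
      rwa [div_le_iff₀ hn] at hmem
    calc ((k ^ cycleCount (h : Perm (Fin n)) : ℕ) : ℝ)
        = (k : ℝ) ^ ((cycleCount (h : Perm (Fin n)) : ℕ) : ℝ) := by
          rw [Real.rpow_natCast]; push_cast; ring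
      _ ≤ K := Real.rpow_le_rpow_of_exponent_le hk1 hσ
  -- the pair set
  set P : Finset (H × (Fin n → S)) :=
    Finset.univ.filter fun p => p.1 ≠ 1 ∧ p.1 • p.2 = p.2 with hPdef
  -- upper bound on |P|
  have hup : (P.card : ℝ) ≤ ((m - 1 : ℕ) : ℝ) * K := by
    have h1 : P.card = ∑ h : H, ((Finset.univ.filter fun x : Fin n → S => h ≠ 1 ∧ h • x = x)).card := by
      rw [hPdef, Finset.card_filter, Fintype.sum_prod_type]
      exact Finset.sum_congr rfl fun h _ => (Finset.card_filter _ _).symm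
    have h2 : P.card = ∑ h ∈ Finset.univ.erase (1 : H),
        ((Finset.univ.filter fun x : Fin n → S => h ≠ 1 ∧ h • x = x)).card := by
      rw [h1]
      rw [Finset.sum_erase]
      simp
    rw [h2]
    push_cast
    have hb : ∀ h ∈ Finset.univ.erase (1 : H),
        (((Finset.univ.filter fun x : Fin n → S => h ≠ 1 ∧ h • x = x)).card : ℝ) ≤ K := by
      intro h hh
      rw [Finset.mem_erase] at hh
      have : (Finset.univ.filter fun x : Fin n → S => h ≠ 1 ∧ h • x = x)
          = Finset.univ.filter fun x : Fin n → S => h • x = x := by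
        apply Finset.filter_congr
        intro x _
        simp [hh.1]
      rw [this]
      exact hfix h hh.1
    calc (∑ h ∈ Finset.univ.erase (1 : H),
          (((Finset.univ.filter fun x : Fin n → S => h ≠ 1 ∧ h • x = x)).card : ℝ))
        ≤ (Finset.univ.erase (1 : H)).card • K := Finset.sum_le_card_nsmul _ _ _ hb
      _ = ((m - 1 : ℕ) : ℝ) * K := by
          rw [Finset.card_erase_of_mem (Finset.mem_univ _), Finset.card_univ, nsmul_eq_mul, hm,
            Nat.card_eq_fintype_card]
  -- stabilizer cardinalities
  set s : (Fin n → S) → ℕ :=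
    fun x => ((Finset.univ.filter fun h : H => h • x = x)).card with hsdef
  have hsx : ∀ x : Fin n → S, s x = Nat.card (stabilizer H x) := by
    intro x
    rw [hsdef]
    calc ((Finset.univ.filter fun h : H => h • x = x)).card
        = Fintype.card {h : H // h • x = x} := (Fintype.card_subtype _).symm
      _ = Nat.card {h : H // h • x = x} := (Nat.card_eq_fintype_card).symm
      _ = Nat.card (stabilizer H x) :=
          Nat.card_congr (Equiv.subtypeEquivRight fun h => (mem_stabilizer_iff).symm)
  have horbstab : ∀ x : Fin n → S, Nat.card (orbit H x) * Nat.card (stabilizer H x) = m := by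
    intro x
    rw [hm, ← Nat.card_prod]
    exact Nat.card_congr (orbitProdStabilizerEquivGroup H x)
  -- lower bound on |P|
  set B : Finset (Fin n → S) :=
    Finset.univ.filter fun x => Nat.card (orbit H x) < Nat.card H with hBdef
  set N := Nat.card {q : Q // Nat.card q.orbit < Nat.card H} with hNdef
  have hlow : N * m ≤ 2 * P.card := by
    have h1 : P.card = ∑ x : Fin n → S,
        ((Finset.univ.filter fun h : H => h ≠ 1 ∧ h • x = x)).card := by
      rw [hPdef, Finset.card_filter, Fintype.sum_prod_type, Finset.sum_comm]
      exact Finset.sum_congr rfl fun x _ => (Finset.card_filter _ _).symm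
    have h3 : ∀ x : Fin n → S,
        ((Finset.univ.filter fun h : H => h ≠ 1 ∧ h • x = x)).card = s x - 1 := by
      intro x
      have he : (Finset.univ.filter fun h : H => h ≠ 1 ∧ h • x = x)
          = ((Finset.univ.filter fun h : H => h • x = x)).erase 1 := by
        ext h
        simp [Finset.mem_erase, and_comm]
      rw [he, Finset.card_erase_of_mem]
      simp [one_smul]
    -- x in a non-regular orbit has stabilizer of size ≥ 2
    have h4 : ∀ x ∈ B, 2 ≤ s x := by
      intro x hx
      rw [hBdef, Finset.mem_filter] at hx
      by_contra hcon
      have hs1 : s x = 1 := by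
        have hpos : 0 < s x := by
          rw [hsx]
          exact Nat.card_pos
        omega
      have := horbstab x
      rw [← hsx x, hs1, mul_one] at this
      rw [← hm] at hx
      omega
    -- sum of stabilizer sizes over B equals N * m
    have h6 : ∀ (q : Q), (∑ x ∈ B.filter (fun x => Quotient.mk'' x = q), s x)
        = if Nat.card q.orbit < Nat.card H then m else 0 := by
      intro q
      split_ifs with hq
      · have hBf : B.filter (fun x => Quotient.mk'' x = q)
            = Finset.univ.filter (fun x => Quotient.mk'' x = q) := by
          ext x
          rw [hBdef]
          simp only [Finset.mem_filter, Finset.mem_univ, true_and]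
          constructor
          · rintro ⟨_, h⟩; exact h
          · intro h
            refine ⟨?_, h⟩
            rwa [← h, orbitRel.Quotient.orbit_mk] at hq
        rw [hBf]
        have hfc : ((Finset.univ.filter fun x : Fin n → S => Quotient.mk'' x = q)).card
            = Nat.card q.orbit := by
          calc ((Finset.univ.filter fun x : Fin n → S => Quotient.mk'' x = q)).card
              = Fintype.card {x : Fin n → S // Quotient.mk'' x = q} :=
                (Fintype.card_subtype _).symm
            _ = Nat.card {x : Fin n → S // Quotient.mk'' x = q} :=
                (Nat.card_eq_fintype_card).symm
            _ = Nat.card q.orbit :=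
                Nat.card_congr (Equiv.subtypeEquivRight fun x =>
                  (orbitRel.Quotient.mem_orbit).symm)
        have hpos : 0 < Nat.card q.orbit := by
          have hne : Nonempty q.orbit := ⟨⟨q.out, orbitRel.Quotient.mem_orbit.mpr (Quotient.out_eq q)⟩⟩
          exact Nat.card_pos
        apply Nat.eq_of_mul_eq_mul_left hpos
        rw [Finset.mul_sum]
        have hterm : ∀ x ∈ Finset.univ.filter (fun x : Fin n → S => Quotient.mk'' x = q),
            Nat.card q.orbit * s x = m := by
          intro x hx
          rw [Finset.mem_filter] at hx
          rw [← hx.2, orbitRel.Quotient.orbit_mk, hsx]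
          exact horbstab x
        rw [Finset.sum_congr rfl hterm, Finset.sum_const, smul_eq_mul, hfc]
      · have hBf : B.filter (fun x => Quotient.mk'' x = q) = ∅ := by
          ext x
          simp only [Finset.mem_filter, Finset.notMem_empty, iff_false, not_and]
          intro hxB hxq
          apply hq
          rw [← hxq, orbitRel.Quotient.orbit_mk]
          rw [hBdef, Finset.mem_filter] at hxB
          exact hxB.2
        rw [hBf, Finset.sum_empty]
    have hN' : N = ((Finset.univ.filter fun q : Q => Nat.card q.orbit < Nat.card H)).card := by
      rw [hNdef, Nat.card_eq_fintype_card]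
      exact Fintype.card_subtype _
    have h7 : (∑ x ∈ B, s x) = N * m := by
      rw [← Finset.sum_fiberwise B (fun x => (Quotient.mk'' x : Q)) s]
      rw [Finset.sum_congr rfl fun q _ => h6 q]
      rw [← Finset.sum_filter]
      rw [Finset.sum_const, smul_eq_mul]
      congr 1
      exact hN'.symm
    calc N * m = ∑ x ∈ B, s x := h7.symm
      _ ≤ ∑ x ∈ B, 2 * (s x - 1) := by
          apply Finset.sum_le_sum
          intro x hx
          have := h4 x hx
          omega
      _ ≤ ∑ x : Fin n → S, 2 * (s x - 1) :=
          Finset.sum_le_sum_of_subset (Finset.subset_univ B)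
      _ = 2 * P.card := by
          rw [h1, Finset.mul_sum]
          exact Finset.sum_congr rfl fun x _ => by rw [h3 x]
  -- final assembly
  have hcast : ((N : ℝ)) * m ≤ 2 * (P.card : ℝ) := by exact_mod_cast hlow
  have hmlt : ((m - 1 : ℕ) : ℝ) < (m : ℝ) := by
    exact_mod_cast Nat.sub_lt hmpos one_pos
  have hfin : (N : ℝ) * m < (2 * K) * m := by
    calc (N : ℝ) * m ≤ 2 * (P.card : ℝ) := hcast
      _ ≤ 2 * (((m - 1 : ℕ) : ℝ) * K) := by linarith
      _ < 2 * ((m : ℝ) * K) := by nlinarith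
      _ = (2 * K) * m := by ring
  have hmR : (0 : ℝ) < m := by exact_mod_cast hmpos
  have := (mul_lt_mul_iff_left₀ hmR).mp hfin
  exact this
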